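/- Let f ≡ μ be a constant control for the system H = H₀ + f(t)H₁ and let λ₁,…,λ_N be the eigenvalues of H₀ + μH₁. Then the gradient of the endpoint map f ↦ U_f(T), given by τ ↦ −i·U_μ(T,τ)H₁U_μ(τ), takes values (as a function of τ ∈ [0,T]) in a real linear span of at most N² − N + 1 functions, namely 1, cos((λ_j−λ_k)τ), sin((λ_j−λ_k)τ) for 1 ≤ j < k ≤ N, tensored with fixed matrices; in particular, since dim u(N) = N², the Jacobian of the endpoint map at any constant control is not of full rank. -/

import Mathlib

open Matrix

/-- At a constant control `f ≡ μ`, with `λ₁,…,λ_N` the eigenvalues of `H₀ + μH₁` and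
`U(t) = e^{-it(H₀+μH₁)}`, the gradient of the endpoint map,
`τ ↦ -i·U(T)U(τ)†H₁U(τ)`, takes values in the span of at most `N² - N + 1`
functions—`1`, `cos((λⱼ-λₖ)τ)`, `sin((λⱼ-λₖ)τ)` for `j < k`—tensored with fixed
matrices; in particular (since `dim u(N) = N²`) the Jacobian of the endpoint map at a
constant control is not of full rank: some nonzero anti-Hermitian direction `D` is
orthogonal to all its values. -/
theorem stmt19 {N : ℕ} (hN : 2 ≤ N) (H₀ H₁ : Matrix (Fin N) (Fin N) ℂ)
    (h0 : H₀ᴴ = H₀) (h1 : H₁ᴴ = H₁) (μ T : ℝ)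
    (hHerm : (H₀ + (μ : ℂ) • H₁).IsHermitian)
    (U : ℝ → Matrix (Fin N) (Fin N) ℂ)
    (hU : ∀ t, U t = NormedSpace.exp ((-(Complex.I * t)) • (H₀ + (μ : ℂ) • H₁))) :
    ∃ m : ℕ, m ≤ N ^ 2 - N + 1 ∧
      ∃ (g : Fin m → ℝ → ℝ) (M : Fin m → Matrix (Fin N) (Fin N) ℂ),
        (∀ i, (g i = fun _ => 1) ∨
          ∃ j k : Fin N, j < k ∧
            ((g i = fun τ => Real.cos ((hHerm.eigenvalues j - hHerm.eigenvalues k) * τ)) ∨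
             (g i = fun τ => Real.sin ((hHerm.eigenvalues j - hHerm.eigenvalues k) * τ)))) ∧
        (∀ τ : ℝ, (-Complex.I) • (U T * (U τ)ᴴ * H₁ * U τ) =
          ∑ i, ((g i τ : ℝ) : ℂ) • M i) ∧
        ∃ D : Matrix (Fin N) (Fin N) ℂ, D ≠ 0 ∧ Dᴴ = -D ∧
          ∀ τ : ℝ,
            (Matrix.trace (Dᴴ * ((-Complex.I) • (U T * (U τ)ᴴ * H₁ * U τ)))).re = 0 := by
  classical
  set lam : Fin N → ℝ := hHerm.eigenvalues with hlam
  set V : Matrix (Fin N) (Fin N) ℂ := (hHerm.eigenvectorUnitary : Matrix (Fin N) (Fin N) ℂ) with hVdef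
  have hV₁ : V * star V = 1 := by
    have := hHerm.eigenvectorUnitary.2
    rw [Matrix.mem_unitaryGroup_iff] at this
    exact this
  have hV₂ : star V * V = 1 := by
    have := hHerm.eigenvectorUnitary.2
    rw [Matrix.mem_unitaryGroup_iff'] at this
    exact this
  have hVinv : V⁻¹ = star V := Matrix.inv_eq_left_inv hV₂
  set B : Matrix (Fin N) (Fin N) ℂ := star V * H₁ * V with hBdef
  -- U t in diagonal form
  have keyU : ∀ t : ℝ, U t =
      V * Matrix.diagonal (fun j => Complex.exp (-(Complex.I * t) * lam j)) * star V := by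
    intro t
    have hVu : IsUnit V := ⟨⟨V, star V, hV₁, hV₂⟩, rfl⟩
    rw [hU t, hHerm.spectral_theorem, Unitary.conjStarAlgAut_apply, ← hVdef, ← hVinv]
    have h1 : (-(Complex.I * t)) •
        ((V * Matrix.diagonal (RCLike.ofReal ∘ lam) * V⁻¹)) =
        V * ((-(Complex.I * t)) • Matrix.diagonal (RCLike.ofReal ∘ lam)) * V⁻¹ := by
      rw [Matrix.mul_smul, Matrix.smul_mul]
    rw [h1, Matrix.exp_conj V _ hVu, hVinv, ← Matrix.diagonal_smul,
      Matrix.exp_diagonal]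
    have hd : NormedSpace.exp ((-(Complex.I * ↑t)) • (RCLike.ofReal ∘ lam)) =
        (fun j => Complex.exp (-(Complex.I * ↑t) * (lam j : ℂ))) := by
      funext j
      rw [Pi.coe_exp, ← Complex.exp_eq_exp_ℂ]
      simp only [Pi.smul_apply, Function.comp_apply, smul_eq_mul]
      norm_num
    rw [hd]
  -- conjugate transpose of U t
  have keyUc : ∀ t : ℝ, (U t)ᴴ =
      V * Matrix.diagonal (fun j => Complex.exp (Complex.I * t * lam j)) * star V := by
    intro t
    rw [keyU t, Matrix.conjTranspose_mul, Matrix.conjTranspose_mul,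
      ← Matrix.star_eq_conjTranspose (star V), star_star, Matrix.diagonal_conjTranspose,
      ← Matrix.star_eq_conjTranspose V, ← mul_assoc]
    have hd : (star fun j => Complex.exp (-(Complex.I * t) * lam j)) =
        fun j => Complex.exp (Complex.I * t * lam j) := by
      funext j
      rw [Pi.star_apply, Complex.star_def, ← Complex.exp_conj]
      congr 1
      simp [Complex.conj_ofReal]
    rw [hd]
  -- the exponentials and fixed matrices
  set E : Fin N → Fin N → ℝ → ℂ :=
    fun j k τ => Complex.exp (((lam j - lam k) * τ : ℝ) * Complex.I) with hE
  set P : Fin N → Fin N → Matrix (Fin N) (Fin N) ℂ :=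
    fun j k => (-Complex.I) • (U T * (V * Matrix.single j k (B j k) * star V)) with hP
  -- main expansion over all pairs
  have expand : ∀ τ : ℝ, (-Complex.I) • (U T * (U τ)ᴴ * H₁ * U τ) =
      ∑ q ∈ (Finset.univ : Finset (Fin N × Fin N)), E q.1 q.2 τ • P q.1 q.2 := by
    intro τ
    have hmid : (U τ)ᴴ * H₁ * U τ =
        V * (Matrix.of fun j k => E j k τ * B j k) * star V := by
      rw [keyUc τ, keyU τ]
      have hassoc : V * Matrix.diagonal (fun j => Complex.exp (Complex.I * τ * lam j)) * star V
            * H₁ * (V * Matrix.diagonal (fun j => Complex.exp (-(Complex.I * τ) * lam j)) * star V)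
          = V * (Matrix.diagonal (fun j => Complex.exp (Complex.I * τ * lam j)) * B *
              Matrix.diagonal (fun j => Complex.exp (-(Complex.I * τ) * lam j))) * star V := by
        rw [hBdef]
        simp only [mul_assoc]
      rw [hassoc]
      congr 1
      congr 1
      ext a b
      rw [Matrix.mul_diagonal, Matrix.diagonal_mul, Matrix.of_apply]
      have hr : Complex.exp (Complex.I * τ * lam a) * B a b *
            Complex.exp (-(Complex.I * τ) * lam b) =
          (Complex.exp (Complex.I * τ * lam a) * Complex.exp (-(Complex.I * τ) * lam b)) *
            B a b := by ring
      rw [hr, ← Complex.exp_add, hE]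
      congr 2
      push_cast
      ring
    have hW : (Matrix.of fun j k => E j k τ * B j k) =
        ∑ q ∈ (Finset.univ : Finset (Fin N × Fin N)),
          E q.1 q.2 τ • Matrix.single q.1 q.2 (B q.1 q.2) := by
      ext a b
      rw [Matrix.sum_apply]
      rw [Finset.sum_eq_single (a, b)]
      · simp [Matrix.smul_apply]
      · intro q _ hq
        have hne : ¬(q.1 = a ∧ q.2 = b) := by
          intro h
          exact hq (Prod.ext h.1 h.2)
        simp [Matrix.smul_apply, Matrix.single_apply_of_ne _ _ _ _ _ hne]
      · intro h
        exact absurd (Finset.mem_univ _) h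
    rw [show U T * (U τ)ᴴ * H₁ * U τ = U T * ((U τ)ᴴ * H₁ * U τ) by
      simp only [mul_assoc]]
    rw [hmid, hW]
    simp only [Matrix.mul_sum, Matrix.sum_mul, Matrix.mul_smul, Matrix.smul_mul,
      Finset.smul_sum, smul_smul, hP]
    refine Finset.sum_congr rfl fun q _ => ?_
    rw [mul_comm]
  -- index set
  set I' : Type := Option {p : Fin N × Fin N // p.1 ≠ p.2} with hI'
  set g' : I' → ℝ → ℝ := fun i => match i with
    | none => fun _ => 1
    | some p =>
        if p.1.1 < p.1.2 then (fun τ => Real.cos ((lam p.1.1 - lam p.1.2) * τ))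
        else (fun τ => Real.sin ((lam p.1.2 - lam p.1.1) * τ)) with hg'
  set M' : I' → Matrix (Fin N) (Fin N) ℂ := fun i => match i with
    | none => ∑ j, P j j
    | some p =>
        if p.1.1 < p.1.2 then P p.1.1 p.1.2 + P p.1.2 p.1.1
        else Complex.I • P p.1.2 p.1.1 - Complex.I • P p.1.1 p.1.2 with hM'
  have hgform : ∀ i : I', (g' i = fun _ => 1) ∨
      ∃ j k : Fin N, j < k ∧
        ((g' i = fun τ => Real.cos ((lam j - lam k) * τ)) ∨
         (g' i = fun τ => Real.sin ((lam j - lam k) * τ))) := by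
    intro i
    match i with
    | none => exact Or.inl rfl
    | some p =>
      right
      by_cases hlt : p.1.1 < p.1.2
      · exact ⟨p.1.1, p.1.2, hlt, Or.inl (by simp only [hg', if_pos hlt])⟩
      · have hgt : p.1.2 < p.1.1 := (lt_or_gt_of_ne p.prop).resolve_left hlt
        exact ⟨p.1.2, p.1.1, hgt, Or.inr (by simp only [hg', if_neg hlt])⟩
  have hsum : ∀ τ : ℝ, (-Complex.I) • (U T * (U τ)ᴴ * H₁ * U τ) =
      ∑ i : I', ((g' i τ : ℝ) : ℂ) • M' i := by
    intro τ
    rw [expand τ]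
    rw [Fintype.sum_option]
    set Ftil : Fin N × Fin N → Matrix (Fin N) (Fin N) ℂ := fun q =>
      if q.1 < q.2 then
        ((Real.cos ((lam q.1 - lam q.2) * τ) : ℝ) : ℂ) • (P q.1 q.2 + P q.2 q.1)
      else
        ((Real.sin ((lam q.2 - lam q.1) * τ) : ℝ) : ℂ) •
          (Complex.I • P q.2 q.1 - Complex.I • P q.1 q.2) with hFtil
    have hnone : ((g' none τ : ℝ) : ℂ) • M' none = ∑ j, P j j := by
      simp only [hg', hM', Complex.ofReal_one, one_smul]
    have hsome : ∑ p : {p : Fin N × Fin N // p.1 ≠ p.2},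
        ((g' (some p) τ : ℝ) : ℂ) • M' (some p) = ∑ q ∈ Finset.univ.offDiag, Ftil q := by
      rw [Finset.sum_subtype (p := fun q : Fin N × Fin N => q.1 ≠ q.2)
        Finset.univ.offDiag (fun x => by simp [Finset.mem_offDiag]) Ftil]
      refine Finset.sum_congr rfl fun p _ => ?_
      by_cases hlt : p.1.1 < p.1.2
      · simp only [hg', hM', hFtil, if_pos hlt]
      · simp only [hg', hM', hFtil, if_neg hlt]
    rw [hnone, hsome]
    have hsplit : (Finset.univ : Finset (Fin N × Fin N)) =
        Finset.univ.diag ∪ Finset.univ.offDiag := by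
      rw [Finset.diag_union_offDiag, Finset.univ_product_univ]
    rw [hsplit, Finset.sum_union (Finset.disjoint_diag_offDiag _)]
    congr 1
    · -- diagonal part
      rw [Finset.sum_diag (f := fun q : Fin N × Fin N => E q.1 q.2 τ • P q.1 q.2)]
      refine Finset.sum_congr rfl fun j _ => ?_
      simp [hE, Complex.exp_zero]
    · -- off-diagonal part
      have hpair : ∀ j k : Fin N, j < k →
          E j k τ • P j k + E k j τ • P k j = Ftil (j, k) + Ftil (k, j) := by
        intro j k hjk
        set θ : ℝ := (lam j - lam k) * τ with hθ
        have h1 : E j k τ = (Real.cos θ : ℂ) + (Real.sin θ : ℂ) * Complex.I := by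
          rw [hE]
          simp only []
          rw [Complex.exp_mul_I, Complex.ofReal_cos, Complex.ofReal_sin]
        have h2 : E k j τ = (Real.cos θ : ℂ) - (Real.sin θ : ℂ) * Complex.I := by
          rw [hE]
          simp only []
          have hneg : ((lam k - lam j) * τ : ℝ) = -θ := by rw [hθ]; ring
          rw [hneg, Complex.ofReal_neg, Complex.exp_mul_I, Complex.cos_neg,
            Complex.sin_neg, neg_mul, ← sub_eq_add_neg, ← Complex.ofReal_cos,
            ← Complex.ofReal_sin]
        have hF1 : Ftil (j, k) = ((Real.cos θ : ℝ) : ℂ) • (P j k + P k j) := by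
          simp only [hFtil, if_pos hjk, hθ]
        have hF2 : Ftil (k, j) = ((Real.sin θ : ℝ) : ℂ) •
            (Complex.I • P j k - Complex.I • P k j) := by
          simp only [hFtil, if_neg (not_lt_of_gt hjk), hθ]
        rw [h1, h2, hF1, hF2]
        ext a b
        simp only [Matrix.add_apply, Matrix.smul_apply, Matrix.sub_apply, smul_eq_mul]
        ring
      have hzero : ∑ q ∈ Finset.univ.offDiag,
          (E q.1 q.2 τ • P q.1 q.2 - Ftil q) = 0 := by
        refine Finset.sum_involution (fun q _ => Prod.swap q) ?_ ?_ ?_ ?_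
        · intro q hq
          have hne : q.1 ≠ q.2 := (Finset.mem_offDiag.mp hq).2.2
          rcases lt_or_gt_of_ne hne with h | h
          · have := hpair q.1 q.2 h
            simp only [Prod.swap]
            rw [sub_add_sub_comm]
            rw [sub_eq_zero]
            calc E q.1 q.2 τ • P q.1 q.2 + E q.2 q.1 τ • P q.2 q.1
                = Ftil (q.1, q.2) + Ftil (q.2, q.1) := this
              _ = Ftil q + Ftil (q.2, q.1) := by rw [Prod.mk.eta]
          · have := hpair q.2 q.1 h
            simp only [Prod.swap]
            rw [sub_add_sub_comm]
            rw [sub_eq_zero, add_comm (E q.1 q.2 τ • P q.1 q.2), add_comm (Ftil q)]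
            calc E q.2 q.1 τ • P q.2 q.1 + E q.1 q.2 τ • P q.1 q.2
                = Ftil (q.2, q.1) + Ftil (q.1, q.2) := this
              _ = Ftil (q.2, q.1) + Ftil q := by rw [Prod.mk.eta]
        · intro q hq _
          have hne : q.1 ≠ q.2 := (Finset.mem_offDiag.mp hq).2.2
          intro hcon
          exact hne (congrArg Prod.fst hcon).symm
        · intro q hq
          have hq' := Finset.mem_offDiag.mp hq
          exact Finset.mem_offDiag.mpr ⟨Finset.mem_univ _, Finset.mem_univ _, hq'.2.2.symm⟩
        · intro q hq
          exact Prod.swap_swap q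
      rw [Finset.sum_sub_distrib] at hzero
      exact sub_eq_zero.mp hzero
  have hcard : Fintype.card I' = N * N - N + 1 := by
    have h1 : Fintype.card {p : Fin N × Fin N // p.1 ≠ p.2} = N * N - N := by
      rw [Fintype.card_subtype]
      have h2 : Finset.filter (fun p : Fin N × Fin N => p.1 ≠ p.2) Finset.univ =
          (Finset.univ : Finset (Fin N)).offDiag := by
        ext q
        simp [Finset.mem_offDiag]
      rw [h2, Finset.offDiag_card, Finset.card_univ, Fintype.card_fin]
    have h3 : Fintype.card I' = Fintype.card {p : Fin N × Fin N // p.1 ≠ p.2} + 1 :=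
      Fintype.card_option
    rw [h3, h1]
  -- the orthogonal direction
  have hD : ∃ D : Matrix (Fin N) (Fin N) ℂ, D ≠ 0 ∧ Dᴴ = -D ∧
      ∀ i : I', (Matrix.trace (Dᴴ * M' i)).re = 0 := by
    set skw : Matrix (Fin N) (Fin N) ℝ → Matrix (Fin N) (Fin N) ℂ := fun X =>
      Matrix.of fun a b =>
        Complex.I * ((X a b : ℂ) + (X b a : ℂ)) + ((X a b : ℂ) - (X b a : ℂ)) with hskw
    have hskw_entry : ∀ (X : Matrix (Fin N) (Fin N) ℝ) (a b : Fin N),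
        skw X a b = Complex.I * ((X a b : ℂ) + (X b a : ℂ)) + ((X a b : ℂ) - (X b a : ℂ)) := by
      intro X a b
      simp [hskw]
    have hskw_skew : ∀ X, (skw X)ᴴ = - skw X := by
      intro X
      ext a b
      rw [Matrix.conjTranspose_apply, Matrix.neg_apply, hskw_entry, hskw_entry,
        Complex.star_def]
      simp only [map_add, map_sub, _root_.map_mul, Complex.conj_I, Complex.conj_ofReal]
      ring
    have hskw_inj : ∀ X, skw X = 0 → X = 0 := by
      intro X h
      ext a b
      have h1 : skw X a b = 0 := by rw [h]; rfl
      rw [hskw_entry] at h1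
      have hre := congrArg Complex.re h1
      have him := congrArg Complex.im h1
      simp only [Complex.add_re, Complex.mul_re, Complex.I_re, Complex.I_im, Complex.add_im,
        Complex.mul_im, Complex.sub_re, Complex.sub_im, Complex.ofReal_re, Complex.ofReal_im,
        Complex.zero_re, Complex.zero_im, Matrix.zero_apply] at hre him
      simp only [Matrix.zero_apply]
      nlinarith [hre, him]
    have hskw_add : ∀ X Y, skw (X + Y) = skw X + skw Y := by
      intro X Y
      ext a b
      rw [Matrix.add_apply, hskw_entry, hskw_entry, hskw_entry]
      push_cast [Matrix.add_apply]
      ring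
    have hskw_smul : ∀ (c : ℝ) X, skw (c • X) = (c : ℂ) • skw X := by
      intro c X
      ext a b
      rw [Matrix.smul_apply, hskw_entry, smul_eq_mul, hskw_entry]
      push_cast [Matrix.smul_apply, smul_eq_mul]
      ring
    set Θ : Matrix (Fin N) (Fin N) ℝ →ₗ[ℝ] (I' → ℝ) :=
      { toFun := fun X i => (Matrix.trace ((skw X)ᴴ * M' i)).re
        map_add' := by
          intro X Y
          funext i
          show (Matrix.trace ((skw (X + Y))ᴴ * M' i)).re =
            (Matrix.trace ((skw X)ᴴ * M' i)).re + (Matrix.trace ((skw Y)ᴴ * M' i)).re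
          rw [hskw_add, Matrix.conjTranspose_add, Matrix.add_mul, Matrix.trace_add,
            Complex.add_re]
        map_smul' := by
          intro c X
          funext i
          show (Matrix.trace ((skw (c • X))ᴴ * M' i)).re =
            c * (Matrix.trace ((skw X)ᴴ * M' i)).re
          rw [hskw_smul, Matrix.conjTranspose_smul, Matrix.smul_mul, Matrix.trace_smul]
          simp [Complex.mul_re, Complex.conj_ofReal] } with hTh
    have hnotinj : ¬ Function.Injective Θ := by
      intro hinj
      have hle := LinearMap.finrank_le_finrank_of_injective hinj
      rw [Module.finrank_matrix, Module.finrank_pi, Module.finrank_self, Fintype.card_fin,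
        mul_one, hcard] at hle
      have hNN : N ≤ N * N := Nat.le_mul_of_pos_left N (by omega)
      omega
    have hker : (LinearMap.ker Θ) ≠ ⊥ := fun h => hnotinj (LinearMap.ker_eq_bot.mp h)
    obtain ⟨X, hXmem, hX0⟩ := Submodule.exists_mem_ne_zero_of_ne_bot hker
    refine ⟨skw X, fun h => hX0 (hskw_inj X h), hskw_skew X, fun i => ?_⟩
    have hXk : Θ X = 0 := LinearMap.mem_ker.mp hXmem
    exact congrFun hXk i
  -- assemble
  refine ⟨Fintype.card I', ?_, fun i => g' ((Fintype.equivFin I').symm i),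
    fun i => M' ((Fintype.equivFin I').symm i), ?_, ?_, ?_⟩
  · have : N ≤ N ^ 2 := by nlinarith
    rw [hcard]; rw [pow_two]
  · intro i
    exact hgform _
  · intro τ
    rw [hsum τ]
    exact (Equiv.sum_comp (Fintype.equivFin I').symm
      (fun i => ((g' i τ : ℝ) : ℂ) • M' i)).symm
  · obtain ⟨D, hD0, hDa, hDo⟩ := hD
    refine ⟨D, hD0, hDa, fun τ => ?_⟩
    rw [hsum τ, Finset.mul_sum, Matrix.trace_sum, Complex.re_sum]
    refine Finset.sum_eq_zero fun i _ => ?_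
    rw [Matrix.mul_smul, Matrix.trace_smul]
    have := hDo i
    simp [smul_eq_mul, Complex.mul_re, this]
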